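/- Consider the two-player game in which each player's action set is [2] × [m] (a 'real' action r ∈ [2] and a 'dummy' action d ∈ [m]), with payoffs u_1((r_1,d_1),(r_2,d_2)) = 1 if r_1 = r_2 and 0 otherwise, and u_2 = 1 − u_1. Let x be the correlated equilibrium defined by x((r_1,d),(r_2,d)) = 1/(4m) for every d ∈ [m] and every r_1, r_2 ∈ [2] (and zero elsewhere). Then there exist constants c > 0 and m₀ ∈ ℕ such that for all m ≥ m₀, the probability that the empirical distribution of k = m i.i.d. samples from x is a (1/(4e))-correlated equilibrium is at most e^{−c·m}. -/

import Mathlib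

open Finset

open scoped Classical

noncomputable section

/-- Empirical distribution of `k` sampled elements of `A`. -/
def empJoint {A : Type*} [Fintype A] [DecidableEq A] (k : ℕ) (a : Fin k → A) : A → ℝ :=
  fun p => ((univ.filter fun t => a t = p).card : ℝ) / k

/-- Probability of the event `E` over `k` i.i.d. samples from the distribution `x`. -/
def PrJoint {A : Type*} [Fintype A] (k : ℕ) (x : A → ℝ) (E : (Fin k → A) → Prop) : ℝ :=
  ∑ a : Fin k → A, if E a then ∏ t, x (a t) else 0

/-- `x ∈ Δ(A₁ × A₂)` is an `ε`-correlated equilibrium of the two-player game with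
payoffs `u₁, u₂`: for every player and every deviation map `f` on that player's
actions the expected regret is at most `ε`. -/
def IsCE2 {A1 A2 : Type*} [Fintype A1] [Fintype A2]
    (u1 u2 : A1 → A2 → ℝ) (x : A1 × A2 → ℝ) (ε : ℝ) : Prop :=
  (∀ f : A1 → A1, ∑ a : A1 × A2, x a * (u1 (f a.1) a.2 - u1 a.1 a.2) ≤ ε) ∧
  (∀ f : A2 → A2, ∑ a : A1 × A2, x a * (u2 a.1 (f a.2) - u2 a.1 a.2) ≤ ε)

namespace Stmt16Aux

variable {m : ℕ}

lemma exp_quad {z : ℝ} (hz : |z| ≤ 1) : Real.exp z ≤ 1 + z + z ^ 2 := by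
  have h := Real.exp_bound hz (n := 2) (by norm_num)
  have h2 : ∑ m ∈ range 2, z ^ m / m.factorial = 1 + z := by
    simp [Finset.sum_range_succ]
  rw [h2] at h
  have h3 := (abs_sub_le_iff.1 h).1
  have h5 : ((Nat.succ 2 : ℕ) : ℝ) / ((Nat.factorial 2 : ℕ) * (2:ℕ)) = 3/4 := by
    norm_num [Nat.factorial]
  rw [h5, sq_abs] at h3
  nlinarith [sq_nonneg z]

lemma step {α : Type*} [Fintype α] [Nonempty α] {c lam : ℝ} (hlam : 0 ≤ lam)
    (h1 : lam * c ≤ 1) (g : α → ℝ) (hg : ∀ v w, |g v - g w| ≤ c) :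
    ∑ v, Real.exp (lam * g v) ≤
      (Fintype.card α) * Real.exp (lam * ((∑ v, g v) / Fintype.card α) + lam ^ 2 * c ^ 2) := by
  set N : ℝ := (Fintype.card α : ℝ) with hN
  have hNpos : 0 < N := by positivity
  set gb : ℝ := (∑ v, g v) / N with hgb
  have hc : 0 ≤ c := le_trans (abs_nonneg _) (hg (Classical.arbitrary α) (Classical.arbitrary α))
  have hdev : ∀ v, |g v - gb| ≤ c := by
    intro v
    have : g v - gb = (∑ w, (g v - g w)) / N := by
      rw [Finset.sum_sub_distrib, Finset.sum_const, card_univ]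
      field_simp [hgb]
      rw [sub_mul, div_mul_cancel₀ _ hNpos.ne', nsmul_eq_mul, hN]; ring
    rw [this, abs_div, abs_of_pos hNpos, div_le_iff₀ hNpos]
    calc |∑ w, (g v - g w)| ≤ ∑ w, |g v - g w| := Finset.abs_sum_le_sum_abs _ _
      _ ≤ ∑ _w : α, c := Finset.sum_le_sum fun w _ => hg v w
      _ = c * N := by rw [Finset.sum_const, card_univ]; ring
  have key : ∀ v, Real.exp (lam * g v) ≤
      Real.exp (lam * gb) * (1 + lam * (g v - gb) + (lam * (g v - gb)) ^ 2) := by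
    intro v
    have hz : |lam * (g v - gb)| ≤ 1 := by
      rw [abs_mul, abs_of_nonneg hlam]
      calc lam * |g v - gb| ≤ lam * c := by
            exact mul_le_mul_of_nonneg_left (hdev v) hlam
        _ ≤ 1 := h1
    calc Real.exp (lam * g v) = Real.exp (lam * gb) * Real.exp (lam * (g v - gb)) := by
          rw [← Real.exp_add]; ring_nf
      _ ≤ _ := by
          apply mul_le_mul_of_nonneg_left (exp_quad hz) (Real.exp_pos _).le
  calc ∑ v, Real.exp (lam * g v)
      ≤ ∑ v, Real.exp (lam * gb) * (1 + lam * (g v - gb) + (lam * (g v - gb)) ^ 2) :=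
        Finset.sum_le_sum fun v _ => key v
    _ ≤ N * Real.exp (lam * gb) * (1 + lam ^ 2 * c ^ 2) := by
        rw [← Finset.mul_sum]
        have e1 : ∑ v, (1 + lam * (g v - gb) + (lam * (g v - gb)) ^ 2)
            = N + lam * (∑ v, (g v - gb)) + ∑ v, (lam * (g v - gb)) ^ 2 := by
          rw [Finset.sum_add_distrib, Finset.sum_add_distrib, ← Finset.mul_sum]
          simp [card_univ]
          exact hN.symm
        have e2 : ∑ v, (g v - gb) = 0 := by
          rw [Finset.sum_sub_distrib, Finset.sum_const, card_univ]
          rw [hgb, nsmul_eq_mul, ← hN, mul_div_assoc', mul_div_cancel_left₀ _ hNpos.ne', sub_self]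
        have e3 : ∑ v, (lam * (g v - gb)) ^ 2 ≤ N * (lam ^ 2 * c ^ 2) := by
          calc ∑ v, (lam * (g v - gb)) ^ 2 ≤ ∑ _v : α, lam ^ 2 * c ^ 2 := by
                apply Finset.sum_le_sum
                intro v _
                rw [mul_pow]
                apply mul_le_mul_of_nonneg_left _ (by positivity)
                calc (g v - gb) ^ 2 = |g v - gb| ^ 2 := (sq_abs _).symm
                  _ ≤ c ^ 2 := by
                    apply pow_le_pow_left₀ (abs_nonneg _) (hdev v)
            _ = N * (lam ^ 2 * c ^ 2) := by rw [Finset.sum_const, card_univ]; ring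
        rw [e1, e2]
        calc Real.exp (lam * gb) * (N + lam * 0 + ∑ v, (lam * (g v - gb)) ^ 2)
            ≤ Real.exp (lam * gb) * (N + lam * 0 + N * (lam ^ 2 * c ^ 2)) := by
              apply mul_le_mul_of_nonneg_left _ (Real.exp_pos _).le
              linarith
          _ = N * Real.exp (lam * gb) * (1 + lam ^ 2 * c ^ 2) := by ring
    _ ≤ N * Real.exp (lam * gb) * Real.exp (lam ^ 2 * c ^ 2) := by
        apply mul_le_mul_of_nonneg_left _ (by positivity)
        have := Real.add_one_le_exp (lam ^ 2 * c ^ 2)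
        linarith
    _ = N * Real.exp (lam * gb + lam ^ 2 * c ^ 2) := by rw [Real.exp_add]; ring

lemma mgf {α : Type*} [Fintype α] [Nonempty α] {c lam : ℝ} (hc : 0 ≤ c) (hlam : 0 ≤ lam)
    (h1 : lam * c ≤ 1) :
    ∀ (k : ℕ) (f : (Fin k → α) → ℝ),
      (∀ (x : Fin k → α) (i : Fin k) (v : α), |f (Function.update x i v) - f x| ≤ c) →
      ∑ x : Fin k → α, Real.exp (lam * f x) ≤
        (Fintype.card α : ℝ) ^ k *
          Real.exp (lam * ((∑ x : Fin k → α, f x) / (Fintype.card α : ℝ) ^ k) + lam ^ 2 * c ^ 2 * k) := by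
  intro k
  induction k with
  | zero =>
      intro f _
      simp only [pow_zero, Nat.cast_zero, mul_zero, add_zero, div_one, one_mul]
      exact le_of_eq (by rw [Fintype.sum_unique, Fintype.sum_unique])
  | succ k ih =>
      intro f hf
      set N : ℝ := (Fintype.card α : ℝ) with hN
      have hNpos : 0 < N := by positivity
      -- reindex the sum via cons
      have hsum : ∀ (h : (Fin (k+1) → α) → ℝ),
          ∑ x : Fin (k+1) → α, h x = ∑ v : α, ∑ y : Fin k → α, h (Fin.cons v y) := by
        intro h
        rw [← Equiv.sum_comp (Fin.consEquiv (fun _ : Fin (k+1) => α)) h, Fintype.sum_prod_type]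
        rfl
      -- means of sections
      set F : α → ℝ := fun v => (∑ y : Fin k → α, f (Fin.cons v y)) / N ^ k with hF
      clear_value F
      have hIH : ∀ v : α, ∑ y : Fin k → α, Real.exp (lam * f (Fin.cons v y)) ≤
          N ^ k * Real.exp (lam * F v + lam ^ 2 * c ^ 2 * k) := by
        intro v
        simp only [hF]
        exact ih (fun y => f (Fin.cons v y)) (by
          intro y i w
          have h := hf (Fin.cons v y) i.succ w
          rwa [← Fin.cons_update] at h)
      have hFlip : ∀ v w : α, |F v - F w| ≤ c := by
        intro v w
        have hd : F v - F w = (∑ y : Fin k → α, (f (Fin.cons v y) - f (Fin.cons w y))) / N ^ k := by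
          simp only [hF]
          rw [Finset.sum_sub_distrib, sub_div]
        rw [hd, abs_div, abs_of_pos (pow_pos hNpos k), div_le_iff₀ (pow_pos hNpos k)]
        calc |∑ y : Fin k → α, (f (Fin.cons v y) - f (Fin.cons w y))|
            ≤ ∑ y : Fin k → α, |f (Fin.cons v y) - f (Fin.cons w y)| := Finset.abs_sum_le_sum_abs _ _
          _ ≤ ∑ _y : Fin k → α, c := by
              apply Finset.sum_le_sum
              intro y _
              have h := hf (Fin.cons w y) 0 v
              rwa [Fin.update_cons_zero] at h
          _ = c * N ^ k := by
              rw [Finset.sum_const, card_univ, Fintype.card_fun]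
              simp [hN]
              ring
      have hstep := step (c := c) hlam h1 F hFlip
      have hmean : (∑ v : α, F v) / N = (∑ x : Fin (k+1) → α, f x) / N ^ (k + 1) := by
        have e : ∑ v : α, F v = (∑ x : Fin (k+1) → α, f x) / N ^ k := by
          rw [hsum f, Finset.sum_div]
          exact Finset.sum_congr rfl fun v _ => by rw [hF]
        rw [e, div_div, ← pow_succ]
      calc ∑ x : Fin (k+1) → α, Real.exp (lam * f x)
          = ∑ v : α, ∑ y : Fin k → α, Real.exp (lam * f (Fin.cons v y)) := hsum _
        _ ≤ ∑ v : α, N ^ k * Real.exp (lam * F v + lam ^ 2 * c ^ 2 * k) :=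
            Finset.sum_le_sum fun v _ => hIH v
        _ = N ^ k * Real.exp (lam ^ 2 * c ^ 2 * k) * ∑ v : α, Real.exp (lam * F v) := by
            rw [Finset.mul_sum]
            refine Finset.sum_congr rfl fun v _ => ?_
            rw [mul_assoc (N ^ k), ← Real.exp_add]
            ring_nf
        _ ≤ N ^ k * Real.exp (lam ^ 2 * c ^ 2 * k) *
              (N * Real.exp (lam * ((∑ v : α, F v) / N) + lam ^ 2 * c ^ 2)) := by
            apply mul_le_mul_of_nonneg_left hstep
              (mul_nonneg (pow_pos hNpos k).le (Real.exp_pos _).le)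
        _ = N ^ (k+1) * Real.exp (lam * ((∑ x : Fin (k+1) → α, f x) / N ^ (k+1)) +
              lam ^ 2 * c ^ 2 * ((k+1 : ℕ) : ℝ)) := by
            have e2 : N ^ k * Real.exp (lam ^ 2 * c ^ 2 * (k:ℝ)) *
                (N * Real.exp (lam * ((∑ v : α, F v) / N) + lam ^ 2 * c ^ 2)) =
                N ^ (k+1) * Real.exp ((lam ^ 2 * c ^ 2 * (k:ℝ)) +
                  (lam * ((∑ v : α, F v) / N) + lam ^ 2 * c ^ 2)) := by
              conv_rhs => rw [Real.exp_add]
              rw [pow_succ]; ring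
            rw [e2, ← hmean]
            have e3 : lam ^ 2 * c ^ 2 * (k:ℝ) + (lam * ((∑ v : α, F v) / N) + lam ^ 2 * c ^ 2)
                = lam * ((∑ v : α, F v) / N) + lam ^ 2 * c ^ 2 * ((k+1 : ℕ) : ℝ) := by
              push_cast; ring
            rw [e3]

/-- `t` is the unique index attaining its value. -/
def uniq (v : Fin m → Fin m) (t : Fin m) : Prop := ∀ s, s ≠ t → v s ≠ v t

def Ucount (v : Fin m → Fin m) : ℕ := (univ.filter (uniq v)).card

def Dcount (v : Fin m → Fin m) : ℕ := (univ.image v).card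

lemma two_D_le (v : Fin m → Fin m) : 2 * Dcount v ≤ m + Ucount v := by
  classical
  -- fibers over the image
  have hcard : ∀ w ∈ univ.image v, 1 ≤ (univ.filter fun t => v t = w).card := by
    intro w hw
    rcases Finset.mem_image.1 hw with ⟨t, _, ht⟩
    have : t ∈ univ.filter fun t => v t = w := by simp [ht]
    exact Finset.card_pos.2 ⟨t, this⟩
  have hsum : ∑ w ∈ univ.image v, (univ.filter fun t => v t = w).card = m := by
    rw [← Finset.card_eq_sum_card_fiberwise (f := v) (s := univ) (t := univ.image v)
      (fun x hx => Finset.mem_image_of_mem v hx)]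
    simp
  -- uniq t iff the fiber of v t is a singleton
  have huniq : ∀ t, uniq v t ↔ (univ.filter fun s => v s = v t).card = 1 := by
    intro t
    constructor
    · intro h
      have : (univ.filter fun s => v s = v t) = {t} := by
        apply Finset.eq_singleton_iff_unique_mem.2
        refine ⟨by simp, ?_⟩
        intro s hs
        by_contra hst
        exact h s hst (by simpa using hs)
      rw [this]; simp
    · intro h s hst hval
      have hsmem : s ∈ univ.filter fun s => v s = v t := by simp [hval]
      have htmem : t ∈ univ.filter fun s => v s = v t := by simp
      rcases Finset.card_eq_one.1 h with ⟨u, hu⟩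
      rw [hu] at hsmem htmem
      simp at hsmem htmem
      exact hst (hsmem.trans htmem.symm)
  -- count unique indices fiberwise
  have hU : Ucount v = ∑ w ∈ univ.image v, if (univ.filter fun t => v t = w).card = 1 then 1 else 0 := by
    rw [Ucount]
    rw [Finset.card_eq_sum_card_fiberwise (f := v) (s := univ.filter (uniq v)) (t := univ.image v)
      (fun x hx => Finset.mem_image_of_mem v (Finset.mem_of_mem_filter x hx))]
    apply Finset.sum_congr rfl
    intro w hw
    rcases Finset.mem_image.1 hw with ⟨t, _, ht⟩
    by_cases hone : (univ.filter fun t => v t = w).card = 1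
    · -- the unique element of the fiber is uniq
      rcases Finset.card_eq_one.1 hone with ⟨u, hu⟩
      have hvu : v u = w := by
        have : u ∈ univ.filter fun t => v t = w := by rw [hu]; simp
        simpa using this
      have huu : uniq v u := by
        rw [huniq u, hvu, hone]
      have : (univ.filter (uniq v)).filter (fun x => v x = w) = {u} := by
        apply Finset.Subset.antisymm
        · intro s hs
          simp only [Finset.mem_filter] at hs
          have : s ∈ univ.filter fun t => v t = w := by simp [hs.2]
          rw [hu] at this; simpa using this
        · intro s hs
          simp only [Finset.mem_singleton] at hs
          subst hs
          simp [huu, hvu]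
      rw [this, hone]
      simp
    · -- no uniq element maps to w
      have : (univ.filter (uniq v)).filter (fun x => v x = w) = ∅ := by
        apply Finset.eq_empty_of_forall_notMem
        intro s hs
        simp only [Finset.mem_filter] at hs
        have := (huniq s).1 hs.1.2
        rw [hs.2] at this
        exact hone this
      rw [this]
      simp [hone]
  -- pointwise: 2 ≤ fiber card + indicator
  have hpt : ∀ w ∈ univ.image v, 2 ≤ (univ.filter fun t => v t = w).card +
      (if (univ.filter fun t => v t = w).card = 1 then 1 else 0) := by
    intro w hw
    by_cases hone : (univ.filter fun t => v t = w).card = 1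
    · simp [hone]
    · have h1 := hcard w hw
      have : 2 ≤ (univ.filter fun t => v t = w).card := by omega
      omega
  calc 2 * Dcount v = ∑ _w ∈ univ.image v, 2 := by rw [Finset.sum_const, Dcount]; ring
    _ ≤ ∑ w ∈ univ.image v, ((univ.filter fun t => v t = w).card +
        (if (univ.filter fun t => v t = w).card = 1 then 1 else 0)) :=
        Finset.sum_le_sum hpt
    _ = m + Ucount v := by rw [Finset.sum_add_distrib, hsum, hU]

lemma D_lip (v : Fin m → Fin m) (s : Fin m) (b : Fin m) :
    |(Dcount (Function.update v s b) : ℝ) - (Dcount v : ℝ)| ≤ 1 := by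
  have key : ∀ (w : Fin m → Fin m) (i : Fin m) (c : Fin m),
      Dcount (Function.update w i c) ≤ Dcount w + 1 := by
    intro w i c
    have hsub : univ.image (Function.update w i c) ⊆ insert c (univ.image w) := by
      intro x hx
      rcases Finset.mem_image.1 hx with ⟨t, _, ht⟩
      by_cases hti : t = i
      · subst hti; rw [Function.update_self] at ht; simp [ht]
      · rw [Function.update_of_ne hti] at ht
        exact Finset.mem_insert_of_mem (ht ▸ Finset.mem_image_of_mem w (Finset.mem_univ t))
    calc Dcount (Function.update w i c) ≤ (insert c (univ.image w)).card :=
          Finset.card_le_card hsub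
      _ ≤ Dcount w + 1 := Finset.card_insert_le _ _
  have h1 := key v s b
  have h2 := key (Function.update v s b) s (v s)
  rw [Function.update_idem, Function.update_eq_self] at h2
  rw [abs_le]
  have h1' : (Dcount (Function.update v s b) : ℝ) ≤ Dcount v + 1 := by exact_mod_cast h1
  have h2' : (Dcount v : ℝ) ≤ Dcount (Function.update v s b) + 1 := by exact_mod_cast h2
  constructor <;> linarith

lemma sum_Dcount_ge (hm : 1 ≤ m) :
    (1 - (Real.exp 1)⁻¹) * m * (m:ℝ)^m ≤ ∑ v : Fin m → Fin m, (Dcount v : ℝ) := by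
  have hm0 : (m:ℝ) ≠ 0 := by positivity
  have hD : ∀ v : Fin m → Fin m, (Dcount v : ℝ) =
      ∑ w : Fin m, (1 - ∏ t : Fin m, if v t ≠ w then (1:ℝ) else 0) := by
    intro v
    have h2 : (Dcount v : ℝ) = ∑ w : Fin m, if w ∈ univ.image v then (1:ℝ) else 0 := by
      rw [Finset.sum_boole, Dcount]
      congr 1
      rw [Finset.filter_mem_eq_inter, Finset.univ_inter]
    rw [h2]
    apply Finset.sum_congr rfl
    intro w _
    rw [Finset.prod_boole]
    by_cases hw : w ∈ univ.image v
    · have hne : ¬ (∀ t ∈ univ, v t ≠ w) := by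
        rcases Finset.mem_image.1 hw with ⟨t, _, ht⟩
        exact fun h => h t (Finset.mem_univ t) ht
      rw [if_pos hw, if_neg hne]; ring
    · have hall : ∀ t ∈ univ, v t ≠ w := by
        intro t _ h
        exact hw (by rw [← h]; exact Finset.mem_image_of_mem v (Finset.mem_univ t))
      rw [if_neg hw, if_pos hall]; ring
  have hswap : ∑ v : Fin m → Fin m, (Dcount v : ℝ)
      = ∑ w : Fin m, ∑ v : Fin m → Fin m, (1 - ∏ t : Fin m, if v t ≠ w then (1:ℝ) else 0) := by
    rw [← Finset.sum_comm]
    exact Finset.sum_congr rfl fun v _ => hD v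
  have hcardfun : ∑ _v : Fin m → Fin m, (1:ℝ) = (m:ℝ)^m := by
    rw [Finset.sum_const, card_univ, Fintype.card_fun]
    simp
  have hprod : ∀ w : Fin m, ∑ v : Fin m → Fin m, (∏ t : Fin m, if v t ≠ w then (1:ℝ) else 0)
      = ((m:ℝ) - 1)^m := by
    intro w
    have := Finset.prod_univ_sum (fun _ : Fin m => (univ : Finset (Fin m)))
      (fun _t p => if p ≠ w then (1:ℝ) else 0)
    rw [Fintype.piFinset_univ] at this
    rw [← this]
    have hsingle : ∑ p : Fin m, (if p ≠ w then (1:ℝ) else 0) = (m:ℝ) - 1 := by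
      have : ∀ p : Fin m, (if p ≠ w then (1:ℝ) else 0) = 1 - (if p = w then (1:ℝ) else 0) := by
        intro p; by_cases h : p = w <;> simp [h]
      rw [Finset.sum_congr rfl fun p _ => this p, Finset.sum_sub_distrib]
      rw [Finset.sum_ite_eq' univ w (fun _ => (1:ℝ))]
      simp
    rw [Finset.prod_congr rfl fun t _ => hsingle]
    simp
  have hmain : ∑ v : Fin m → Fin m, (Dcount v : ℝ)
      = (m:ℝ) * ((m:ℝ)^m - ((m:ℝ) - 1)^m) := by
    rw [hswap]
    have : ∀ w : Fin m, ∑ v : Fin m → Fin m, (1 - ∏ t : Fin m, if v t ≠ w then (1:ℝ) else 0)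
        = (m:ℝ)^m - ((m:ℝ)-1)^m := by
      intro w
      rw [Finset.sum_sub_distrib, hcardfun, hprod w]
    rw [Finset.sum_congr rfl fun w _ => this w, Finset.sum_const, card_univ, Fintype.card_fin]
    simp
  rw [hmain]
  -- (m-1)^m ≤ m^m / e
  have hbase : (0:ℝ) ≤ 1 - 1/(m:ℝ) := by
    rw [sub_nonneg, div_le_one (by positivity)]
    exact_mod_cast hm
  have hexp : (1 - 1/(m:ℝ)) ≤ Real.exp (-(1/(m:ℝ))) := by
    have := Real.add_one_le_exp (-(1/(m:ℝ)))
    linarith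
  have hpow : (1 - 1/(m:ℝ))^m ≤ (Real.exp 1)⁻¹ := by
    calc (1 - 1/(m:ℝ))^m ≤ (Real.exp (-(1/(m:ℝ))))^m :=
          pow_le_pow_left₀ hbase hexp m
      _ = Real.exp ((m:ℝ) * (-(1/(m:ℝ)))) := by
          rw [← Real.exp_nat_mul]
      _ = (Real.exp 1)⁻¹ := by
          rw [mul_neg, mul_one_div, div_self hm0, ← Real.exp_neg]
  have hfact : ((m:ℝ) - 1)^m = (m:ℝ)^m * (1 - 1/(m:ℝ))^m := by
    rw [← mul_pow]
    congr 1
    field_simp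
  have h1 : ((m:ℝ) - 1)^m ≤ (m:ℝ)^m * (Real.exp 1)⁻¹ := by
    rw [hfact]
    exact mul_le_mul_of_nonneg_left hpow (by positivity)
  have hc1 : (1:ℝ) ≤ (m:ℝ) := by exact_mod_cast hm
  nlinarith [pow_pos (show (0:ℝ) < (m:ℝ) by positivity) m]

lemma emp_sum {A : Type*} [Fintype A] [DecidableEq A] (a : Fin m → A) (φ : A → ℝ) :
    ∑ p : A, empJoint m a p * φ p = (∑ t : Fin m, φ (a t)) / m := by
  have expand : ∀ p : A, ((univ.filter fun t => a t = p).card : ℝ) * φ p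
      = ∑ t : Fin m, (if a t = p then φ p else 0) := by
    intro p
    rw [Finset.card_filter]
    push_cast
    rw [Finset.sum_mul]
    apply Finset.sum_congr rfl
    intro t _
    by_cases h : a t = p <;> simp [h]
  have key : ∑ p : A, ((univ.filter fun t => a t = p).card : ℝ) * φ p
      = ∑ t : Fin m, φ (a t) := by
    rw [Finset.sum_congr rfl fun p _ => expand p, Finset.sum_comm]
    refine Finset.sum_congr rfl fun t _ => ?_
    rw [Finset.sum_ite_eq univ (a t) (fun p => φ p)]
    simp
  unfold empJoint
  rw [← key, Finset.sum_div]
  refine Finset.sum_congr rfl fun p _ => ?_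
  rw [div_mul_eq_mul_div]

/-- If the empirical distribution of a fully-supported sample is an ε-CE, then
few samples have a unique dummy. -/
lemma ce_implies_few_uniq {ε : ℝ} (a : Fin m → (Fin 2 × Fin m) × (Fin 2 × Fin m))
    (hm : 1 ≤ m)
    (hsupp : ∀ t, (a t).1.2 = (a t).2.2)
    (hCE : IsCE2
      (fun a1 a2 : Fin 2 × Fin m => if a1.1 = a2.1 then (1 : ℝ) else 0)
      (fun a1 a2 : Fin 2 × Fin m => if a1.1 = a2.1 then (0 : ℝ) else 1)
      (empJoint m a) ε) :
    (Ucount (fun t => (a t).1.2) : ℝ) ≤ 2 * ε * m := by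
  have hmR : (0:ℝ) < m := by exact_mod_cast hm
  set v : Fin m → Fin m := fun t => (a t).1.2 with hv
  set C : Fin m → Prop := fun w => ∃ s, uniq v s ∧ v s = w with hC
  have hCu : ∀ t, uniq v t → C (v t) := fun t ht => ⟨t, ht, rfl⟩
  have hCchoose : ∀ t (ht : uniq v t) (h : C (v t)), Classical.choose h = t := by
    intro t ht h
    by_contra hne
    exact ht (Classical.choose h) hne (Classical.choose_spec h).2
  have hCn : ∀ t, ¬ uniq v t → ¬ C (v t) := by
    intro t ht ⟨s, hs, hvs⟩
    by_cases hst : s = t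
    · exact ht (hst ▸ hs)
    · exact hs t (fun h => hst h.symm) hvs.symm
  set χ : Fin m → ℝ := fun t => if (a t).1.1 = (a t).2.1 then (1:ℝ) else 0 with hχ
  -- player 1 deviation
  set f1 : Fin 2 × Fin m → Fin 2 × Fin m :=
    fun q => if h : C q.2 then ((a (Classical.choose h)).2.1, q.2) else q with hf1
  have claim1 : ∀ t, ((if (f1 (a t).1).1 = (a t).2.1 then (1:ℝ) else 0)
      - (if (a t).1.1 = (a t).2.1 then (1:ℝ) else 0))
      = (if uniq v t then 1 - χ t else 0) := by
    intro t
    by_cases ht : uniq v t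
    · have h : C ((a t).1.2) := hCu t ht
      have e1 : f1 (a t).1 = ((a (Classical.choose h)).2.1, (a t).1.2) := by
        rw [hf1]; exact dif_pos h
      rw [e1, hCchoose t ht h]
      simp [ht, hχ]
    · have h : ¬ C ((a t).1.2) := hCn t ht
      have e1 : f1 (a t).1 = (a t).1 := by
        rw [hf1]
        simp only []
        rw [dif_neg h]
      rw [e1]
      simp [ht]
  -- player 2 deviation
  set f2 : Fin 2 × Fin m → Fin 2 × Fin m :=
    fun q => if h : C q.2 then ((if (a (Classical.choose h)).1.1 = 0 then 1 else 0), q.2) else q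
      with hf2
  have hflip : ∀ r : Fin 2, ¬ (r = if r = 0 then 1 else 0) := by decide
  have claim2 : ∀ t, ((if (a t).1.1 = (f2 (a t).2).1 then (0:ℝ) else 1)
      - (if (a t).1.1 = (a t).2.1 then (0:ℝ) else 1))
      = (if uniq v t then χ t else 0) := by
    intro t
    by_cases ht : uniq v t
    · have h : C ((a t).2.2) := by rw [← hsupp t]; exact hCu t ht
      have e1 : f2 (a t).2 = ((if (a (Classical.choose h)).1.1 = 0 then 1 else 0), (a t).2.2) := by
        rw [hf2]; exact dif_pos h
      have hch : Classical.choose h = t := by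
        by_contra hne
        have hsp := (Classical.choose_spec h).2
        exact ht (Classical.choose h) hne (hsp.trans (hsupp t).symm)
      rw [e1, hch]
      rw [if_neg (hflip ((a t).1.1))]
      by_cases hx : (a t).1.1 = (a t).2.1 <;> simp [hx, ht, hχ]
    · have h : ¬ C ((a t).2.2) := by rw [← hsupp t]; exact hCn t ht
      have e1 : f2 (a t).2 = (a t).2 := by
        rw [hf2]
        simp only []
        rw [dif_neg h]
      rw [e1]
      simp [ht]
  -- apply the CE property
  have h1 := hCE.1 f1
  have h2 := hCE.2 f2
  rw [emp_sum a (fun p => ((if (f1 p.1).1 = p.2.1 then (1:ℝ) else 0)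
      - (if p.1.1 = p.2.1 then (1:ℝ) else 0)))] at h1
  rw [emp_sum a (fun p => ((if p.1.1 = (f2 p.2).1 then (0:ℝ) else 1)
      - (if p.1.1 = p.2.1 then (0:ℝ) else 1)))] at h2
  rw [Finset.sum_congr rfl (fun t _ => claim1 t)] at h1
  rw [Finset.sum_congr rfl (fun t _ => claim2 t)] at h2
  have hadd : (∑ t, if uniq v t then (1:ℝ) - χ t else 0)
      + (∑ t, if uniq v t then χ t else 0) = (Ucount v : ℝ) := by
    rw [← Finset.sum_add_distrib]
    have : ∀ t, ((if uniq v t then (1:ℝ) - χ t else 0) + (if uniq v t then χ t else 0))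
        = (if uniq v t then (1:ℝ) else 0) := by
      intro t
      by_cases ht : uniq v t <;> simp [ht]
    rw [Finset.sum_congr rfl (fun t _ => this t), Finset.sum_boole, Ucount]
  have hA : (∑ t, if uniq v t then (1:ℝ) - χ t else 0) ≤ ε * m := by
    rw [div_le_iff₀ hmR] at h1
    exact h1
  have hB : (∑ t, if uniq v t then χ t else 0) ≤ ε * m := by
    rw [div_le_iff₀ hmR] at h2
    exact h2
  have := hadd ▸ (add_le_add hA hB)
  calc (Ucount v : ℝ) ≤ ε * m + ε * m := this
    _ = 2 * ε * m := by ring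

abbrev xdist (m : ℕ) : (Fin 2 × Fin m) × (Fin 2 × Fin m) → ℝ :=
  fun p => if p.1.2 = p.2.2 then 1 / (4 * (m : ℝ)) else 0

lemma xdist_nonneg (p) : 0 ≤ xdist m p := by
  unfold xdist
  by_cases h : p.1.2 = p.2.2 <;> simp [h] <;> positivity

lemma sum_pair (w : Fin m) (c : ℝ) :
    ∑ q : Fin 2 × Fin m, (if q.2 = w then c else 0) = 2 * c := by
  rw [Fintype.sum_prod_type]
  have h : ∀ r : Fin 2, ∑ d : Fin m, (if d = w then c else 0) = c := by
    intro r
    rw [Finset.sum_ite_eq' univ w (fun _ => c)]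
    simp
  rw [Finset.sum_congr rfl fun r _ => h r]
  rw [Finset.sum_const]
  simp

lemma marginal (w : Fin m) :
    ∑ p : (Fin 2 × Fin m) × (Fin 2 × Fin m), xdist m p * (if p.1.2 = w then (1:ℝ) else 0)
      = 1 / (m:ℝ) := by
  have hmR : (0:ℝ) < m := by have := w.pos; exact_mod_cast this
  have point : ∀ p : (Fin 2 × Fin m) × (Fin 2 × Fin m),
      xdist m p * (if p.1.2 = w then (1:ℝ) else 0)
        = (if p.1.2 = w then 1/(4*(m:ℝ)) else 0) * (if p.2.2 = w then (1:ℝ) else 0) := by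
    intro p
    unfold xdist
    rcases eq_or_ne p.1.2 w with h1 | h1
    · rcases eq_or_ne p.2.2 w with h2 | h2
      · simp [h1, h2]
      · simp [h1, h2, Ne.symm h2]
    · simp [h1]
  rw [Finset.sum_congr rfl fun p _ => point p, Fintype.sum_prod_type]
  have inner : ∀ p1 : Fin 2 × Fin m,
      ∑ p2 : Fin 2 × Fin m, (if p1.2 = w then 1/(4*(m:ℝ)) else 0) * (if p2.2 = w then (1:ℝ) else 0)
        = (if p1.2 = w then 1/(4*(m:ℝ)) else 0) * 2 := by
    intro p1
    rw [← Finset.mul_sum, sum_pair w (1:ℝ)]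
    ring
  rw [Finset.sum_congr rfl fun p1 _ => inner p1]
  have : ∑ p1 : Fin 2 × Fin m, (if p1.2 = w then 1/(4*(m:ℝ)) else 0) * 2
      = (2 * (1/(4*(m:ℝ)))) * 2 := by
    rw [← Finset.sum_mul, sum_pair w (1/(4*(m:ℝ)))]
  have hm0 : (m:ℝ) ≠ 0 := ne_of_gt hmR
  rw [this]
  field_simp
  norm_num

lemma fiber_prod (v : Fin m → Fin m) :
    ∑ a ∈ univ.filter (fun a : Fin m → (Fin 2 × Fin m) × (Fin 2 × Fin m) =>
        (fun t => (a t).1.2) = v), ∏ t, xdist m (a t)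
      = (1 / (m:ℝ))^m := by
  rw [Finset.sum_filter]
  have point : ∀ a : Fin m → (Fin 2 × Fin m) × (Fin 2 × Fin m),
      (if (fun t => (a t).1.2) = v then ∏ t, xdist m (a t) else 0)
        = ∏ t, (xdist m (a t) * (if (a t).1.2 = v t then (1:ℝ) else 0)) := by
    intro a
    rw [Finset.prod_mul_distrib, Finset.prod_boole]
    by_cases h : (fun t => (a t).1.2) = v
    · have h' : ∀ t ∈ univ, (a t).1.2 = v t := fun t _ => congrFun h t
      rw [if_pos h, if_pos h', mul_one]
    · have h' : ¬ (∀ t ∈ univ, (a t).1.2 = v t) := by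
        intro hall
        exact h (funext fun t => hall t (Finset.mem_univ t))
      rw [if_neg h, if_neg h', mul_zero]
  rw [Finset.sum_congr rfl fun a _ => point a]
  have := Finset.prod_univ_sum (fun _ : Fin m => (univ : Finset ((Fin 2 × Fin m) × (Fin 2 × Fin m))))
    (fun t p => xdist m p * (if p.1.2 = v t then (1:ℝ) else 0))
  rw [Fintype.piFinset_univ] at this
  rw [← this, Finset.prod_congr rfl fun t _ => marginal (v t)]
  simp

lemma pr_le_marginal (Q : (Fin m → Fin m) → Prop) :
    PrJoint m (xdist m) (fun a => (∃ t, (a t).1.2 ≠ (a t).2.2) ∨ Q (fun t => (a t).1.2))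
      ≤ ∑ v : Fin m → Fin m, (if Q v then (1:ℝ) else 0) * (1 / (m:ℝ))^m := by
  have expand : PrJoint m (xdist m)
      (fun a => (∃ t, (a t).1.2 ≠ (a t).2.2) ∨ Q (fun t => (a t).1.2))
      = ∑ a : Fin m → (Fin 2 × Fin m) × (Fin 2 × Fin m),
        (if (∃ t, (a t).1.2 ≠ (a t).2.2) ∨ Q (fun t => (a t).1.2)
          then ∏ t, xdist m (a t) else 0) := by
    unfold PrJoint
    refine Finset.sum_congr rfl fun a _ => ?_
    congr 1
  rw [expand]
  haveI : Nonempty (Fin m → (Fin 2 × Fin m) × (Fin 2 × Fin m)) := ⟨fun i => (((0 : Fin 2), i), ((0 : Fin 2), i))⟩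
  have pointwise : ∀ a : Fin m → (Fin 2 × Fin m) × (Fin 2 × Fin m),
      (if (∃ t, (a t).1.2 ≠ (a t).2.2) ∨ Q (fun t => (a t).1.2)
        then ∏ t, xdist m (a t) else 0)
      ≤ (if Q (fun t => (a t).1.2) then ∏ t, xdist m (a t) else 0) := by
    intro a
    have hprodnn : 0 ≤ ∏ t, xdist m (a t) := Finset.prod_nonneg fun t _ => xdist_nonneg _
    by_cases hq : Q (fun t => (a t).1.2)
    · rw [if_pos hq]
      by_cases he : (∃ t, (a t).1.2 ≠ (a t).2.2) ∨ Q (fun t => (a t).1.2)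
      · rw [if_pos he]
      · rw [if_neg he]; exact hprodnn
    · rw [if_neg hq]
      by_cases hoff : ∃ t, (a t).1.2 ≠ (a t).2.2
      · rcases hoff with ⟨t, ht⟩
        have : ∏ t, xdist m (a t) = 0 := by
          apply Finset.prod_eq_zero (Finset.mem_univ t)
          unfold xdist
          rw [if_neg ht]
        by_cases he : (∃ t, (a t).1.2 ≠ (a t).2.2) ∨ Q (fun t => (a t).1.2)
        · rw [if_pos he, this]
        · rw [if_neg he]
      · have he : ¬ ((∃ t, (a t).1.2 ≠ (a t).2.2) ∨ Q (fun t => (a t).1.2)) := by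
          push_neg
          push_neg at hoff
          exact ⟨hoff, hq⟩
        rw [if_neg he]
  calc ∑ a : Fin m → (Fin 2 × Fin m) × (Fin 2 × Fin m),
        (if (∃ t, (a t).1.2 ≠ (a t).2.2) ∨ Q (fun t => (a t).1.2)
          then ∏ t, xdist m (a t) else 0)
      ≤ ∑ a : Fin m → (Fin 2 × Fin m) × (Fin 2 × Fin m),
        (if Q (fun t => (a t).1.2) then ∏ t, xdist m (a t) else 0) :=
        Finset.sum_le_sum fun a _ => pointwise a
    _ = ∑ v : Fin m → Fin m, ∑ a ∈ univ.filter
          (fun a : Fin m → (Fin 2 × Fin m) × (Fin 2 × Fin m) => (fun t => (a t).1.2) = v),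
          (if Q (fun t => (a t).1.2) then ∏ t, xdist m (a t) else 0) := by
        rw [Finset.sum_fiberwise]
    _ = ∑ v : Fin m → Fin m, (if Q v then (1:ℝ) else 0) * (1 / (m:ℝ))^m := by
        refine Finset.sum_congr rfl fun v _ => ?_
        have : ∀ a ∈ univ.filter
            (fun a : Fin m → (Fin 2 × Fin m) × (Fin 2 × Fin m) => (fun t => (a t).1.2) = v),
            (if Q (fun t => (a t).1.2) then ∏ t, xdist m (a t) else 0)
              = (if Q v then (1:ℝ) else 0) * ∏ t, xdist m (a t) := by
          intro a ha
          have hv : (fun t => (a t).1.2) = v := by simpa using ha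
          rw [hv]
          by_cases hq : Q v <;> simp [hq]
        rw [Finset.sum_congr rfl this, ← Finset.mul_sum, fiber_prod v]

lemma PrJoint_mono {A : Type*} [Fintype A] (k : ℕ) (x : A → ℝ) (hx : ∀ p, 0 ≤ x p)
    {E E' : (Fin k → A) → Prop} (h : ∀ a, E a → E' a) :
    PrJoint k x E ≤ PrJoint k x E' := by
  unfold PrJoint
  apply Finset.sum_le_sum
  intro a _
  have hnn : 0 ≤ ∏ t, x (a t) := Finset.prod_nonneg fun t _ => hx _
  by_cases hE : E a
  · rw [if_pos hE, if_pos (h a hE)]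
  · rw [if_neg hE]
    by_cases hE' : E' a
    · rw [if_pos hE']; exact hnn
    · rw [if_neg hE']

/-- Numeric constant. -/
def eps0 : ℝ := 1/2 - 5/(4*Real.exp 1)

lemma e_pos : (0:ℝ) < Real.exp 1 := Real.exp_pos 1

lemma eps0_pos : 0 < eps0 := by
  unfold eps0
  have h : (2.7182818283 : ℝ) < Real.exp 1 := Real.exp_one_gt_d9
  have h2 : 5/(4*Real.exp 1) < 1/2 := by
    rw [div_lt_div_iff₀ (by positivity) (by norm_num)]
    nlinarith
  linarith

lemma eps0_le : eps0 ≤ 1/2 := by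
  unfold eps0
  have := e_pos
  have : 0 < 5/(4*Real.exp 1) := by positivity
  linarith

/-- The concentration bound on the bad set. -/
lemma count_bad {m : ℕ} (hm : 1 ≤ m) :
    ∑ v : Fin m → Fin m, (if (Ucount v : ℝ) ≤ (m:ℝ)/(2*Real.exp 1) then (1:ℝ) else 0)
        * (1 / (m:ℝ))^m
      ≤ Real.exp (-(eps0^2/4 * m)) := by
  haveI : Nonempty (Fin m) := ⟨⟨0, hm⟩⟩
  set e : ℝ := Real.exp 1 with he
  have hepos : (0:ℝ) < e := Real.exp_pos 1
  have hmR : (0:ℝ) < m := by exact_mod_cast hm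
  set lam : ℝ := eps0/2 with hlam
  have hlam0 : 0 ≤ lam := by rw [hlam]; linarith [eps0_pos]
  have hlam1 : lam * 1 ≤ 1 := by rw [hlam, mul_one]; linarith [eps0_le]
  set δ : ℝ := 1/2 + 1/(4*e) with hδ
  -- Lipschitz property of -D
  have hf : ∀ (x : Fin m → Fin m) (i : Fin m) (v : Fin m),
      |(fun w => -(Dcount w : ℝ)) (Function.update x i v) - (fun w => -(Dcount w : ℝ)) x| ≤ 1 := by
    intro x i v
    simp only []
    rw [show -(Dcount (Function.update x i v) : ℝ) - -(Dcount x : ℝ)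
      = -((Dcount (Function.update x i v) : ℝ) - (Dcount x : ℝ)) from by ring, abs_neg]
    exact D_lip x i v
  have hmgf := mgf (by norm_num : (0:ℝ) ≤ 1) hlam0 hlam1 m (fun w => -(Dcount w : ℝ)) hf
  rw [Fintype.card_fin] at hmgf
  simp only [one_pow, mul_one] at hmgf
  have hmean : (∑ v : Fin m → Fin m, -(Dcount v : ℝ)) / (m:ℝ)^m ≤ -((1 - e⁻¹) * m) := by
    rw [Finset.sum_neg_distrib, neg_div, neg_le_neg_iff, le_div_iff₀ (pow_pos hmR m)]
    exact sum_Dcount_ge hm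
  have hexp_mono : Real.exp (lam * ((∑ v : Fin m → Fin m, -(Dcount v:ℝ))/(m:ℝ)^m) + lam^2*(m:ℝ))
      ≤ Real.exp (lam * (-((1 - e⁻¹)*(m:ℝ))) + lam^2*(m:ℝ)) := by
    apply Real.exp_le_exp.2
    have := mul_le_mul_of_nonneg_left hmean hlam0
    linarith
  have hpoint : ∀ v : Fin m → Fin m,
      (if (Ucount v : ℝ) ≤ (m:ℝ)/(2*e) then (1:ℝ) else 0)
        ≤ Real.exp (lam*δ*m) * Real.exp (lam * -(Dcount v : ℝ)) := by
    intro v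
    by_cases hq : (Ucount v : ℝ) ≤ (m:ℝ)/(2*e)
    · rw [if_pos hq, ← Real.exp_add]
      have h2R : 2*(Dcount v : ℝ) ≤ (m:ℝ) + (Ucount v : ℝ) := by exact_mod_cast two_D_le v
      have ha : (m:ℝ)/(2*e) = 2*((1/(4*e))*(m:ℝ)) := by
        field_simp
        ring
      have hD2 : (Dcount v : ℝ) ≤ δ * m := by
        rw [hδ]
        rw [ha] at hq
        nlinarith
      apply Real.one_le_exp
      nlinarith [mul_nonneg hlam0 (sub_nonneg.2 hD2)]
    · rw [if_neg hq]
      positivity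
  calc ∑ v : Fin m → Fin m, (if (Ucount v : ℝ) ≤ (m:ℝ)/(2*e) then (1:ℝ) else 0) * (1 / (m:ℝ))^m
      = (∑ v : Fin m → Fin m, (if (Ucount v : ℝ) ≤ (m:ℝ)/(2*e) then (1:ℝ) else 0)) * (1/(m:ℝ))^m := by
        rw [← Finset.sum_mul]
    _ ≤ (Real.exp (lam*δ*m) * ∑ v : Fin m → Fin m, Real.exp (lam * -(Dcount v:ℝ))) * (1/(m:ℝ))^m := by
        apply mul_le_mul_of_nonneg_right _ (by positivity)
        calc ∑ v : Fin m → Fin m, (if (Ucount v : ℝ) ≤ (m:ℝ)/(2*e) then (1:ℝ) else 0)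
            ≤ ∑ v : Fin m → Fin m, Real.exp (lam*δ*m) * Real.exp (lam * -(Dcount v:ℝ)) :=
              Finset.sum_le_sum fun v _ => hpoint v
          _ = Real.exp (lam*δ*m) * ∑ v : Fin m → Fin m, Real.exp (lam * -(Dcount v:ℝ)) := by
              rw [Finset.mul_sum]
    _ ≤ (Real.exp (lam*δ*m) * ((m:ℝ)^m * Real.exp (lam * (-((1 - e⁻¹)*(m:ℝ))) + lam^2*(m:ℝ))))
          * (1/(m:ℝ))^m := by
        apply mul_le_mul_of_nonneg_right _ (by positivity)
        apply mul_le_mul_of_nonneg_left _ (Real.exp_pos _).le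
        exact le_trans hmgf (mul_le_mul_of_nonneg_left hexp_mono (by positivity))
    _ = Real.exp (lam*δ*m) * Real.exp (lam * (-((1 - e⁻¹)*(m:ℝ))) + lam^2*(m:ℝ))
          * ((m:ℝ)^m * (1/(m:ℝ))^m) := by ring
    _ = Real.exp (lam*δ*m + (lam * (-((1 - e⁻¹)*(m:ℝ))) + lam^2*(m:ℝ))) := by
        rw [← Real.exp_add]
        have hone : (m:ℝ)^m * (1/(m:ℝ))^m = 1 := by
          rw [← mul_pow]
          rw [mul_one_div, div_self (ne_of_gt hmR), one_pow]
        rw [hone, mul_one]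
    _ ≤ Real.exp (-(eps0^2/4 * m)) := by
        apply Real.exp_le_exp.2
        have hrel : δ = (1 - e⁻¹) - eps0 := by
          rw [hδ]
          unfold eps0
          rw [← he]
          field_simp
          ring
        apply le_of_eq
        rw [hrel, hlam]
        ring

end Stmt16Aux

open Stmt16Aux in
/-- Consider the two-player game where each action is a pair
`(r, d) ∈ [2] × [m]` of a "real" matching-pennies action and a "dummy" action, with
`u₁ = 1_{r₁ = r₂}` and `u₂ = 1 − u₁`, and let `x` be the correlated equilibrium that
puts probability `1/(4m)` on each profile `((r₁,d),(r₂,d))` (common dummy action).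
Then there are constants `c > 0` and `m₀` such that for all `m ≥ m₀`, the probability
that the empirical distribution of `k = m` i.i.d. samples from `x` is a
`1/(4e)`-correlated equilibrium is at most `e^{−c·m}`. -/
theorem stmt16 :
    ∃ c > (0 : ℝ), ∃ m₀ : ℕ, ∀ m : ℕ, m₀ ≤ m →
      PrJoint m
        (fun p : (Fin 2 × Fin m) × (Fin 2 × Fin m) =>
          if p.1.2 = p.2.2 then 1 / (4 * (m : ℝ)) else 0)
        (fun a => IsCE2
          (fun a1 a2 : Fin 2 × Fin m => if a1.1 = a2.1 then (1 : ℝ) else 0)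
          (fun a1 a2 : Fin 2 × Fin m => if a1.1 = a2.1 then (0 : ℝ) else 1)
          (empJoint m a) (1 / (4 * Real.exp 1)))
      ≤ Real.exp (-(c * m)) := by
  refine ⟨eps0^2/4, div_pos (pow_pos eps0_pos 2) (by norm_num), 1, ?_⟩
  intro m hm
  have hmR : (0:ℝ) < m := by exact_mod_cast hm
  set Q : (Fin m → Fin m) → Prop :=
    fun v => (Ucount v : ℝ) ≤ (m:ℝ)/(2*Real.exp 1) with hQ
  have hx : ∀ p : (Fin 2 × Fin m) × (Fin 2 × Fin m),
      0 ≤ (if p.1.2 = p.2.2 then 1 / (4 * (m : ℝ)) else 0) := by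
    intro p
    by_cases h : p.1.2 = p.2.2
    · rw [if_pos h]; positivity
    · rw [if_neg h]
  have himp : ∀ a : Fin m → (Fin 2 × Fin m) × (Fin 2 × Fin m),
      IsCE2
        (fun a1 a2 : Fin 2 × Fin m => if a1.1 = a2.1 then (1 : ℝ) else 0)
        (fun a1 a2 : Fin 2 × Fin m => if a1.1 = a2.1 then (0 : ℝ) else 1)
        (empJoint m a) (1 / (4 * Real.exp 1)) →
      ((∃ t, (a t).1.2 ≠ (a t).2.2) ∨ Q (fun t => (a t).1.2)) := by
    intro a hCE
    by_cases hoff : ∃ t, (a t).1.2 ≠ (a t).2.2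
    · exact Or.inl hoff
    · right
      push_neg at hoff
      have hU := ce_implies_few_uniq a hm hoff hCE
      rw [hQ]
      calc (Ucount (fun t => (a t).1.2) : ℝ)
          ≤ 2*(1/(4*Real.exp 1))*(m:ℝ) := hU
        _ = (m:ℝ)/(2*Real.exp 1) := by
            have : Real.exp 1 ≠ 0 := Real.exp_ne_zero 1
            field_simp
            ring
  calc PrJoint m
        (fun p : (Fin 2 × Fin m) × (Fin 2 × Fin m) =>
          if p.1.2 = p.2.2 then 1 / (4 * (m : ℝ)) else 0)
        (fun a => IsCE2
          (fun a1 a2 : Fin 2 × Fin m => if a1.1 = a2.1 then (1 : ℝ) else 0)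
          (fun a1 a2 : Fin 2 × Fin m => if a1.1 = a2.1 then (0 : ℝ) else 1)
          (empJoint m a) (1 / (4 * Real.exp 1)))
      ≤ PrJoint m (xdist m)
        (fun a => (∃ t, (a t).1.2 ≠ (a t).2.2) ∨ Q (fun t => (a t).1.2)) :=
        PrJoint_mono m _ hx himp
    _ ≤ ∑ v : Fin m → Fin m, (if Q v then (1:ℝ) else 0) * (1 / (m:ℝ))^m :=
        pr_le_marginal Q
    _ ≤ Real.exp (-(eps0^2/4 * m)) := count_bad hm
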